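/- Let A be a symmetric real n×n matrix with eigenvalues λ₁ ≥ ⋯ ≥ λₙ, and let B be any symmetric n×n matrix with at most 1 positive and at most d negative eigenvalues (d ≤ n−1). Then ‖A − B‖_F² ≥ Σ_{i=2}^{n−d} λ_i² + Σ_{i=n−d+1}^{n} (max(λ_i,0))². -/

import Mathlib

open Matrix

theorem key_eq {n : ℕ} (Q P : Matrix (Fin n) (Fin n) ℝ)
    (hQ : Qᵀ * Q = 1) (hP : Pᵀ * P = 1) (μ ν : Fin n → ℝ) :
    ∑ i, ∑ j, ((Q * diagonal μ * Qᵀ) i j - (P * diagonal ν * Pᵀ) i j) ^ 2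
      = ∑ i, ∑ k, ((Qᵀ * P) i k) ^ 2 * (μ i - ν k) ^ 2 := by
  set A := Q * diagonal μ * Qᵀ with hA
  set B := P * diagonal ν * Pᵀ with hB
  set M := Qᵀ * P with hM
  have hQQ : Q * Qᵀ = 1 := mul_eq_one_comm.mp hQ
  have hPP : P * Pᵀ = 1 := mul_eq_one_comm.mp hP
  -- row and column sums of S
  have hMMt : M * Mᵀ = 1 := by
    rw [hM, Matrix.transpose_mul, Matrix.transpose_transpose, Matrix.mul_assoc,
      ← Matrix.mul_assoc P, hPP, Matrix.one_mul, hQ]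
  have hMtM : Mᵀ * M = 1 := mul_eq_one_comm.mp hMMt
  have rowsum : ∀ i, ∑ k, (M i k) ^ 2 = 1 := by
    intro i
    have := congrFun (congrFun hMMt i) i
    simp only [Matrix.mul_apply, Matrix.transpose_apply, Matrix.one_apply_eq] at this
    rw [← this]
    exact Finset.sum_congr rfl fun k _ => sq (M i k)
  have colsum : ∀ k, ∑ i, (M i k) ^ 2 = 1 := by
    intro k
    have := congrFun (congrFun hMtM k) k
    simp only [Matrix.mul_apply, Matrix.transpose_apply, Matrix.one_apply_eq] at this
    rw [← this]
    exact Finset.sum_congr rfl fun i _ => sq (M i k)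
  -- traces
  have frob : ∀ X Y : Matrix (Fin n) (Fin n) ℝ, (∑ i, ∑ j, X i j * Y i j) = trace (X * Yᵀ) := by
    intro X Y
    simp [Matrix.trace, Matrix.diag, Matrix.mul_apply, Matrix.transpose_apply]
  have hAt : Aᵀ = A := by
    rw [hA]
    simp only [Matrix.transpose_mul, Matrix.transpose_transpose, Matrix.diagonal_transpose,
      Matrix.mul_assoc]
  have hBt : Bᵀ = B := by
    rw [hB]
    simp only [Matrix.transpose_mul, Matrix.transpose_transpose, Matrix.diagonal_transpose,
      Matrix.mul_assoc]
  have tAA : trace (A * A) = ∑ i, μ i ^ 2 := by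
    have e : A * A = Q * ((diagonal μ * diagonal μ) * Qᵀ) := by
      rw [hA]
      calc Q * diagonal μ * Qᵀ * (Q * diagonal μ * Qᵀ)
          = Q * diagonal μ * (Qᵀ * Q) * (diagonal μ * Qᵀ) := by simp only [Matrix.mul_assoc]
        _ = Q * ((diagonal μ * diagonal μ) * Qᵀ) := by
            rw [hQ, Matrix.mul_one]; simp only [Matrix.mul_assoc]
    rw [e, Matrix.trace_mul_comm, Matrix.mul_assoc, hQ, Matrix.mul_one, diagonal_mul_diagonal,
      trace_diagonal]
    exact Finset.sum_congr rfl fun i _ => (sq (μ i)).symm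
  have tBB : trace (B * B) = ∑ i, ν i ^ 2 := by
    have e : B * B = P * ((diagonal ν * diagonal ν) * Pᵀ) := by
      rw [hB]
      calc P * diagonal ν * Pᵀ * (P * diagonal ν * Pᵀ)
          = P * diagonal ν * (Pᵀ * P) * (diagonal ν * Pᵀ) := by simp only [Matrix.mul_assoc]
        _ = P * ((diagonal ν * diagonal ν) * Pᵀ) := by
            rw [hP, Matrix.mul_one]; simp only [Matrix.mul_assoc]
    rw [e, Matrix.trace_mul_comm, Matrix.mul_assoc, hP, Matrix.mul_one, diagonal_mul_diagonal,
      trace_diagonal]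
    exact Finset.sum_congr rfl fun i _ => (sq (ν i)).symm
  have tAB : trace (A * B) = ∑ i, ∑ k, μ i * ν k * (M i k) ^ 2 := by
    have e : A * B = Q * (diagonal μ * (Qᵀ * (P * (diagonal ν * Pᵀ)))) := by
      rw [hA, hB]; simp only [Matrix.mul_assoc]
    rw [e, Matrix.trace_mul_comm]
    have e2 : diagonal μ * (Qᵀ * (P * (diagonal ν * Pᵀ))) * Q
        = diagonal μ * (M * (diagonal ν * Mᵀ)) := by
      rw [hM]
      simp only [Matrix.transpose_mul, Matrix.transpose_transpose, Matrix.mul_assoc]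
    rw [e2]
    simp only [Matrix.trace, Matrix.diag]
    refine Finset.sum_congr rfl fun i _ => ?_
    rw [Matrix.diagonal_mul, Matrix.mul_apply, Finset.mul_sum]
    refine Finset.sum_congr rfl fun k _ => ?_
    rw [Matrix.diagonal_mul, Matrix.transpose_apply]
    ring
  -- LHS expansion
  have lhs_eq : ∑ i, ∑ j, (A i j - B i j) ^ 2
      = (∑ i, μ i ^ 2) + (∑ i, ν i ^ 2) - 2 * ∑ i, ∑ k, μ i * ν k * (M i k) ^ 2 := by
    have expand : ∀ i j, (A i j - B i j) ^ 2
        = A i j * A i j - 2 * (A i j * B i j) + B i j * B i j := fun i j => by ring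
    calc ∑ i, ∑ j, (A i j - B i j) ^ 2
        = (∑ i, ∑ j, A i j * A i j) - 2 * (∑ i, ∑ j, A i j * B i j)
            + ∑ i, ∑ j, B i j * B i j := by
          simp only [expand, Finset.sum_add_distrib, Finset.sum_sub_distrib, Finset.mul_sum]
      _ = trace (A * Aᵀ) - 2 * trace (A * Bᵀ) + trace (B * Bᵀ) := by rw [frob, frob, frob]
      _ = _ := by rw [hAt, hBt, tAA, tAB, tBB]; ring
  rw [lhs_eq]
  -- RHS expansion
  have expand2 : ∀ (i k : Fin n), (M i k) ^ 2 * (μ i - ν k) ^ 2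
      = μ i ^ 2 * (M i k) ^ 2 + ν k ^ 2 * (M i k) ^ 2 - 2 * (μ i * ν k * (M i k) ^ 2) :=
    fun i k => by ring
  have r1 : ∑ i, ∑ k, μ i ^ 2 * (M i k) ^ 2 = ∑ i, μ i ^ 2 := by
    refine Finset.sum_congr rfl fun i _ => ?_
    rw [← Finset.mul_sum, rowsum, mul_one]
  have r2 : ∑ i, ∑ k, ν k ^ 2 * (M i k) ^ 2 = ∑ k, ν k ^ 2 := by
    rw [Finset.sum_comm]
    refine Finset.sum_congr rfl fun k _ => ?_
    rw [← Finset.mul_sum, colsum, mul_one]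
  calc (∑ i, μ i ^ 2) + (∑ i, ν i ^ 2) - 2 * ∑ i, ∑ k, μ i * ν k * (M i k) ^ 2
      = (∑ i, ∑ k, μ i ^ 2 * (M i k) ^ 2) + (∑ i, ∑ k, ν k ^ 2 * (M i k) ^ 2)
          - 2 * ∑ i, ∑ k, μ i * ν k * (M i k) ^ 2 := by rw [r1, r2]
    _ = ∑ i, ∑ k, (M i k) ^ 2 * (μ i - ν k) ^ 2 := by
        simp only [expand2, Finset.sum_add_distrib, Finset.sum_sub_distrib, Finset.mul_sum]

theorem card_ge {n m : ℕ} (h : m ≤ n) :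
    (Finset.univ.filter fun j : Fin n => m ≤ j.val).card = n - m := by
  rcases eq_or_lt_of_le h with h'|h'
  · subst h'
    rw [Finset.filter_false_of_mem, Finset.card_empty]; omega
    intro j _; have := j.isLt; omega
  · have e : (Finset.univ.filter fun j : Fin n => m ≤ j.val) = Finset.Ici ⟨m, h'⟩ := by
      ext j; simp [Fin.le_def]
    rw [e, Fin.card_Ici]

theorem comb {n d : ℕ} (hn : 0 < n) (hd : d ≤ n - 1)
    (S : Fin n → Fin n → ℝ) (hS : ∀ i j, 0 ≤ S i j)
    (rowsum : ∀ i, ∑ j, S i j = 1) (colsum : ∀ j, ∑ i, S i j = 1)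
    (μ ν : Fin n → ℝ) (hμ : Antitone μ)
    (hν0 : 0 ≤ ν ⟨0, hn⟩) (hνpos : ∀ j : Fin n, 1 ≤ j.val → ν j ≤ 0)
    (hνneg : ∀ j : Fin n, j.val < n - d → 0 ≤ ν j) :
    (∑ i ∈ Finset.univ.filter fun i : Fin n => 1 ≤ i.val ∧ i.val < n - d, μ i ^ 2)
      + (∑ i ∈ Finset.univ.filter fun i : Fin n => n - d ≤ i.val, max (μ i) 0 ^ 2)
    ≤ ∑ i, ∑ k, S i k * (μ i - ν k) ^ 2 := by
  haveI : NeZero n := ⟨hn.ne'⟩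
  have hz : (⟨0, hn⟩ : Fin n) = 0 := rfl
  set g : Fin n → ℝ := fun i => max (μ i) 0 ^ 2 with hgdef
  set h : Fin n → ℝ := fun i => min (μ i) 0 ^ 2 with hhdef
  have hg0 : ∀ i, 0 ≤ g i := fun i => sq_nonneg _
  have hh0 : ∀ i, 0 ≤ h i := fun i => sq_nonneg _
  have hgh : ∀ i, g i + h i = μ i ^ 2 := by
    intro i
    rcases le_total (μ i) 0 with hm|hm
    · simp [hgdef, hhdef, max_eq_right hm, min_eq_left hm]
    · simp [hgdef, hhdef, max_eq_left hm, min_eq_right hm]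
  have hnd1 : 1 ≤ n - d := by omega
  have gant : ∀ i : Fin n, g i ≤ g 0 := by
    intro i
    have h1 : μ i ≤ μ 0 := hμ (Fin.zero_le i)
    have h2 := max_le_max h1 (le_refl (0:ℝ))
    exact pow_le_pow_left₀ (le_max_right _ _) h2 2
  have hmono : ∀ i j : Fin n, i ≤ j → h i ≤ h j := by
    intro i j hij
    have h1 : min (μ j) 0 ≤ min (μ i) 0 := min_le_min (hμ hij) le_rfl
    have h2 : min (μ i) 0 ≤ 0 := min_le_right _ _
    simp only [hhdef]
    nlinarith
  -- pointwise lower bound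
  have flb : ∀ i k : Fin n,
      ((if 1 ≤ k.val then g i else 0) + (if k.val < n - d then h i else 0))
        ≤ (μ i - ν k) ^ 2 := by
    intro i k
    have hsq := sq_nonneg (μ i - ν k)
    rcases Nat.lt_or_ge k.val 1 with hk|hk
    · have hk0 : k = 0 := by ext; simpa using hk
      have hνk : 0 ≤ ν k := by rw [hk0, ← hz]; exact hν0
      simp only [if_neg (by omega : ¬ 1 ≤ k.val), if_pos (by omega : k.val < n - d), zero_add]
      rcases le_total (μ i) 0 with hm|hm
      · simp only [hhdef, min_eq_left hm]; nlinarith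
      · simp only [hhdef, min_eq_right hm]; nlinarith
    · have hνk : ν k ≤ 0 := hνpos k hk
      rw [if_pos hk]
      by_cases hk2 : k.val < n - d
      · have hνk2 : 0 ≤ ν k := hνneg k hk2
        have hz2 : ν k = 0 := le_antisymm hνk hνk2
        rw [if_pos hk2, hgh i, hz2, sub_zero]
      · rw [if_neg hk2, add_zero]
        rcases le_total 0 (μ i) with hm|hm
        · simp only [hgdef, max_eq_left hm]; nlinarith
        · simp only [hgdef, max_eq_right hm]; nlinarith
  -- step 1
  have step1 : ∑ i, ∑ k, S i k *
        ((if 1 ≤ k.val then g i else 0) + (if k.val < n - d then h i else 0))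
      ≤ ∑ i, ∑ k, S i k * (μ i - ν k) ^ 2 := by
    refine Finset.sum_le_sum fun i _ => Finset.sum_le_sum fun k _ => ?_
    exact mul_le_mul_of_nonneg_left (flb i k) (hS i k)
  refine le_trans ?_ step1
  set J1 : Finset (Fin n) := Finset.univ.filter fun k : Fin n => 1 ≤ k.val with hJ1
  set J2 : Finset (Fin n) := Finset.univ.filter fun k : Fin n => k.val < n - d with hJ2
  set J3 : Finset (Fin n) := Finset.univ.filter fun k : Fin n => n - d ≤ k.val with hJ3
  have eJ1 : J1 = Finset.univ.erase 0 := by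
    ext k
    simp only [hJ1, Finset.mem_filter, Finset.mem_univ, true_and, Finset.mem_erase, and_true]
    rw [Nat.one_le_iff_ne_zero]
    rw [Ne, Ne, Fin.ext_iff, Fin.val_zero]
  have partJ : ∀ f : Fin n → ℝ, (∑ k ∈ J2, f k) + (∑ k ∈ J3, f k) = ∑ k, f k := by
    intro f
    have := Finset.sum_filter_add_sum_filter_not Finset.univ
      (fun k : Fin n => k.val < n - d) f
    rw [hJ2, hJ3]
    rw [← this]
    congr 1
    refine Finset.sum_congr ?_ fun _ _ => rfl
    apply Finset.filter_congr
    intro k _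
    simp only [not_lt, eq_iff_iff]
  -- row decomposition
  have rowdec : ∀ i, ∑ k, S i k *
        ((if 1 ≤ k.val then g i else 0) + (if k.val < n - d then h i else 0))
      = g i * (∑ k ∈ J1, S i k) + h i * (∑ k ∈ J2, S i k) := by
    intro i
    calc ∑ k, S i k * ((if 1 ≤ k.val then g i else 0) + (if k.val < n - d then h i else 0))
        = ∑ k : Fin n, ((if 1 ≤ k.val then S i k * g i else 0)
            + (if k.val < n - d then S i k * h i else 0)) := by
          refine Finset.sum_congr rfl fun k _ => ?_
          split_ifs <;> ring
      _ = (∑ k ∈ J1, S i k * g i) + (∑ k ∈ J2, S i k * h i) := by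
          rw [Finset.sum_add_distrib, Finset.sum_filter, Finset.sum_filter]
      _ = g i * (∑ k ∈ J1, S i k) + h i * (∑ k ∈ J2, S i k) := by
          rw [← Finset.sum_mul, ← Finset.sum_mul]; ring
  have tot : ∑ i, ∑ k, S i k *
        ((if 1 ≤ k.val then g i else 0) + (if k.val < n - d then h i else 0))
      = (∑ i, g i * (∑ k ∈ J1, S i k)) + (∑ i, h i * (∑ k ∈ J2, S i k)) := by
    simp only [rowdec]
    rw [Finset.sum_add_distrib]
  rw [tot]
  -- rewrite the target
  have tsplit : (∑ i ∈ Finset.univ.filter fun i : Fin n => 1 ≤ i.val ∧ i.val < n - d, μ i ^ 2)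
      = (∑ i ∈ Finset.univ.filter fun i : Fin n => 1 ≤ i.val ∧ i.val < n - d, g i)
        + (∑ i ∈ Finset.univ.filter fun i : Fin n => 1 ≤ i.val ∧ i.val < n - d, h i) := by
    rw [← Finset.sum_add_distrib]
    exact Finset.sum_congr rfl fun i _ => (hgh i).symm
  rw [tsplit]
  -- Claim 1 : g-part
  have claim1 : (∑ i ∈ Finset.univ.filter fun i : Fin n => 1 ≤ i.val ∧ i.val < n - d, g i)
      + (∑ i ∈ J3, g i) ≤ ∑ i, g i * (∑ k ∈ J1, S i k) := by
    have merge : (∑ i ∈ Finset.univ.filter fun i : Fin n => 1 ≤ i.val ∧ i.val < n - d, g i)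
        + (∑ i ∈ J3, g i) = ∑ i ∈ J1, g i := by
      rw [hJ3, hJ1, Finset.sum_filter, Finset.sum_filter, Finset.sum_filter,
        ← Finset.sum_add_distrib]
      refine Finset.sum_congr rfl fun i _ => ?_
      by_cases h1 : 1 ≤ i.val
      · by_cases h2 : i.val < n - d
        · rw [if_pos ⟨h1,h2⟩, if_neg (by omega), if_pos h1, add_zero]
        · rw [if_neg (by omega), if_pos (by omega), if_pos h1, zero_add]
      · rw [if_neg (by omega), if_neg (by omega), if_neg h1, add_zero]
    rw [merge]
    have aval : ∀ i, (∑ k ∈ J1, S i k) = 1 - S i 0 := by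
      intro i
      have hr := rowsum i
      rw [← Finset.add_sum_erase Finset.univ (S i) (Finset.mem_univ 0)] at hr
      rw [eJ1]; linarith
    have bnd : ∑ i, g i * S i 0 ≤ g 0 := by
      calc ∑ i, g i * S i 0 ≤ ∑ i, g 0 * S i 0 :=
            Finset.sum_le_sum fun i _ => mul_le_mul_of_nonneg_right (gant i) (hS i 0)
        _ = g 0 := by rw [← Finset.mul_sum, colsum, mul_one]
    have e1 : ∑ i ∈ J1, g i = (∑ i, g i) - g 0 := by
      rw [eJ1, Finset.sum_erase_eq_sub (Finset.mem_univ 0)]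
    have e2 : ∑ i, g i * (∑ k ∈ J1, S i k) = (∑ i, g i) - ∑ i, g i * S i 0 := by
      rw [← Finset.sum_sub_distrib]
      refine Finset.sum_congr rfl fun i _ => ?_
      rw [aval i]; ring
    rw [e1, e2]; linarith
  -- Claim 2 : h-part
  have claim2 : (∑ i ∈ Finset.univ.filter fun i : Fin n => 1 ≤ i.val ∧ i.val < n - d, h i)
      ≤ ∑ i, h i * (∑ k ∈ J2, S i k) := by
    set r : Fin n → ℝ := fun i => ∑ k ∈ J3, S i k with hrdef
    have hr0 : ∀ i, 0 ≤ r i := fun i => Finset.sum_nonneg fun k _ => hS i k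
    have hr1 : ∀ i, r i ≤ 1 := by
      intro i
      rw [← rowsum i, hrdef]
      exact Finset.sum_le_sum_of_subset_of_nonneg (Finset.filter_subset _ _)
        (fun k _ _ => hS i k)
    have bval : ∀ i, (∑ k ∈ J2, S i k) = 1 - r i := by
      intro i
      have := partJ (S i)
      rw [rowsum i] at this
      linarith [this]
    have hndn : n - d ≤ n := by omega
    have cardJ3 : (J3.card : ℝ) = d := by
      rw [hJ3, card_ge hndn]
      have : n - (n - d) = d := by omega
      rw [this]
    have sumr : ∑ i, r i = d := by
      simp only [hrdef]
      rw [Finset.sum_comm]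
      calc ∑ k ∈ J3, ∑ i, S i k = ∑ k ∈ J3, (1:ℝ) :=
            Finset.sum_congr rfl fun k _ => colsum k
        _ = (J3.card : ℝ) := by rw [Finset.sum_const, nsmul_eq_mul, mul_one]
        _ = d := cardJ3
    have key2 : ∑ i, h i * r i ≤ h 0 + ∑ i ∈ J3, h i := by
      rcases Nat.eq_zero_or_pos d with hd0|hd1
      · have eJ3 : J3 = ∅ := by
          rw [hJ3]
          apply Finset.filter_false_of_mem
          intro k _
          have := k.isLt
          omega
        have : ∀ i, r i = 0 := fun i => by rw [hrdef]; simp [eJ3]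
        simp only [this, mul_zero, Finset.sum_const_zero, eJ3, Finset.sum_empty, add_zero]
        exact hh0 0
      · set c : Fin n := ⟨n - d, by omega⟩ with hcdef
        have hsplit : ∑ i, h i * r i = (∑ i ∈ J2, h i * r i) + ∑ i ∈ J3, h i * r i :=
          (partJ _).symm
        have b1 : ∑ i ∈ J2, h i * r i ≤ h c * ∑ i ∈ J2, r i := by
          rw [Finset.mul_sum]
          refine Finset.sum_le_sum fun i hi => ?_
          have hiv : i.val < n - d := by
            rw [hJ2] at hi
            exact (Finset.mem_filter.mp hi).2
          have hcv : (c : ℕ) = n - d := rfl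
          have hic : i ≤ c := by rw [Fin.le_def]; omega
          exact mul_le_mul_of_nonneg_right (hmono i c hic) (hr0 i)
        have b2 : ∑ i ∈ J3, h i * r i ≤ (∑ i ∈ J3, h i) - h c * ((J3.card : ℝ) - ∑ i ∈ J3, r i) := by
          have per : ∀ i ∈ J3, h i * r i ≤ h i - h c * (1 - r i) := by
            intro i hi
            have hiv : n - d ≤ i.val := by
              rw [hJ3] at hi
              exact (Finset.mem_filter.mp hi).2
            have hcv : (c : ℕ) = n - d := rfl
            have hci : c ≤ i := by rw [Fin.le_def]; omega
            have := hmono c i hci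
            nlinarith [hr1 i]
          calc ∑ i ∈ J3, h i * r i ≤ ∑ i ∈ J3, (h i - h c * (1 - r i)) :=
                Finset.sum_le_sum per
            _ = (∑ i ∈ J3, h i) - h c * ((J3.card : ℝ) - ∑ i ∈ J3, r i) := by
                simp only [Finset.sum_sub_distrib, mul_sub, mul_one, Finset.sum_const,
                  nsmul_eq_mul, ← Finset.mul_sum]
                ring
        have rsum_split : (∑ i ∈ J2, r i) + ∑ i ∈ J3, r i = (d : ℝ) := by
          rw [partJ r, sumr]
        have hhc : 0 ≤ h c := hh0 c
        have : ∑ i, h i * r i ≤ ∑ i ∈ J3, h i := by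
          rw [hsplit, cardJ3] at *
          nlinarith [b1, b2, rsum_split]
        linarith [hh0 0]
    have e3 : ∑ i, h i * (∑ k ∈ J2, S i k) = (∑ i, h i) - ∑ i, h i * r i := by
      rw [← Finset.sum_sub_distrib]
      refine Finset.sum_congr rfl fun i _ => ?_
      rw [bval i]; ring
    have e4 : (∑ i ∈ Finset.univ.filter fun i : Fin n => 1 ≤ i.val ∧ i.val < n - d, h i)
        = (∑ i ∈ J2, h i) - h 0 := by
      have e5 : (Finset.univ.filter fun i : Fin n => 1 ≤ i.val ∧ i.val < n - d) = J2.erase 0 := by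
        ext i
        rw [hJ2]
        simp only [Finset.mem_filter, Finset.mem_univ, true_and, Finset.mem_erase]
        rw [Nat.one_le_iff_ne_zero, and_congr_left_iff]
        intro _
        rw [Ne, Ne, Fin.ext_iff, Fin.val_zero]
      rw [e5, Finset.sum_erase_eq_sub]
      rw [hJ2]
      simp only [Finset.mem_filter, Finset.mem_univ, true_and]
      simp
      omega
    rw [e3, e4]
    have hpart2 := partJ h
    linarith [key2, hpart2]
  linarith [claim1, claim2]

theorem strain_lower_bound {n d : ℕ} (hn : 0 < n) (hd : d ≤ n - 1)
    (A B : Matrix (Fin n) (Fin n) ℝ)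
    (Q : Matrix (Fin n) (Fin n) ℝ) (hQ : Qᵀ * Q = 1)
    (μ : Fin n → ℝ) (hμ : Antitone μ)
    (hA : A = Q * Matrix.diagonal μ * Qᵀ)
    (P : Matrix (Fin n) (Fin n) ℝ) (hP : Pᵀ * P = 1)
    (ν : Fin n → ℝ) (hν : Antitone ν)
    (hB : B = P * Matrix.diagonal ν * Pᵀ)
    (hBpos : (Finset.univ.filter fun i => 0 < ν i).card ≤ 1)
    (hBneg : (Finset.univ.filter fun i => ν i < 0).card ≤ d) :
    (∑ i ∈ Finset.univ.filter fun i : Fin n => 1 ≤ i.val ∧ i.val < n - d, μ i ^ 2)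
      + (∑ i ∈ Finset.univ.filter fun i : Fin n => n - d ≤ i.val, max (μ i) 0 ^ 2)
    ≤ ∑ i, ∑ j, (A i j - B i j) ^ 2 := by
  haveI : NeZero n := ⟨hn.ne'⟩
  have hdn : d < n := by omega
  -- sign structure of ν
  have hν0 : 0 ≤ ν ⟨0, hn⟩ := by
    by_contra hc
    push_neg at hc
    have hsub : Finset.univ ⊆ Finset.univ.filter fun i => ν i < 0 := by
      intro k _
      refine Finset.mem_filter.mpr ⟨Finset.mem_univ k, ?_⟩
      have : ν k ≤ ν ⟨0, hn⟩ := hν (by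
        rw [Fin.le_def]
        have : ((⟨0, hn⟩ : Fin n) : ℕ) = 0 := rfl
        omega)
      linarith
    have := Finset.card_le_card hsub
    rw [Finset.card_univ, Fintype.card_fin] at this
    omega
  have hνpos : ∀ j : Fin n, 1 ≤ j.val → ν j ≤ 0 := by
    intro j hj
    by_contra hc
    push_neg at hc
    have h0j : (0 : Fin n) ≠ j := by
      intro e
      have : ((0 : Fin n) : ℕ) = 0 := rfl
      rw [← e] at hj
      omega
    have hν0j : 0 < ν 0 := lt_of_lt_of_le hc (hν (Fin.zero_le j))
    have hsub : ({0, j} : Finset (Fin n)) ⊆ Finset.univ.filter fun i => 0 < ν i := by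
      intro x hx
      rcases Finset.mem_insert.mp hx with hx0 | hxj
      · exact Finset.mem_filter.mpr ⟨Finset.mem_univ x, hx0 ▸ hν0j⟩
      · rw [Finset.mem_singleton] at hxj
        exact Finset.mem_filter.mpr ⟨Finset.mem_univ x, hxj ▸ hc⟩
    have hcard : ({0, j} : Finset (Fin n)).card = 2 := Finset.card_pair h0j
    have := Finset.card_le_card hsub
    omega
  have hνneg : ∀ j : Fin n, j.val < n - d → 0 ≤ ν j := by
    intro j hj
    by_contra hc
    push_neg at hc
    have hsub : (Finset.univ.filter fun k : Fin n => j.val ≤ k.val)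
        ⊆ Finset.univ.filter fun i => ν i < 0 := by
      intro k hk
      have hk2 : j.val ≤ k.val := (Finset.mem_filter.mp hk).2
      refine Finset.mem_filter.mpr ⟨Finset.mem_univ k, ?_⟩
      have : ν k ≤ ν j := hν (by rw [Fin.le_def]; omega)
      linarith
    have hc1 := Finset.card_le_card hsub
    rw [card_ge (le_of_lt j.isLt)] at hc1
    omega
  -- orthogonality facts for M = Qᵀ * P
  set M := Qᵀ * P with hM
  have hQQ : Q * Qᵀ = 1 := mul_eq_one_comm.mp hQ
  have hPP : P * Pᵀ = 1 := mul_eq_one_comm.mp hP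
  have hMMt : M * Mᵀ = 1 := by
    rw [hM, Matrix.transpose_mul, Matrix.transpose_transpose, Matrix.mul_assoc,
      ← Matrix.mul_assoc P, hPP, Matrix.one_mul, hQ]
  have hMtM : Mᵀ * M = 1 := mul_eq_one_comm.mp hMMt
  have rowsum : ∀ i, ∑ k, (M i k) ^ 2 = 1 := by
    intro i
    have := congrFun (congrFun hMMt i) i
    simp only [Matrix.mul_apply, Matrix.transpose_apply, Matrix.one_apply_eq] at this
    rw [← this]
    exact Finset.sum_congr rfl fun k _ => sq (M i k)
  have colsum : ∀ k, ∑ i, (M i k) ^ 2 = 1 := by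
    intro k
    have := congrFun (congrFun hMtM k) k
    simp only [Matrix.mul_apply, Matrix.transpose_apply, Matrix.one_apply_eq] at this
    rw [← this]
    exact Finset.sum_congr rfl fun i _ => sq (M i k)
  rw [hA, hB, key_eq Q P hQ hP μ ν]
  exact comb hn hd (fun i k => (M i k) ^ 2) (fun i k => sq_nonneg _) rowsum colsum μ ν hμ
    hν0 hνpos hνneg
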